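/- Let B_T ~ N(0,T) with T > 0, σ > 0, a = (ρ - μ + σ²/2)T/σ, and ρ > μ. Then M·Pr{B_T ≤ a}·e^{ρT} + M·E[𝟙{B_T > a}·exp((μ - σ²/2)T + σ B_T)] > M·e^{ρT} for any M > 0. -/

import Mathlib

open MeasureTheory ProbabilityTheory Real

lemma integrable_exp_lin_gaussian (v : NNReal) (hv : v ≠ 0) (c s : ℝ) :
    Integrable (fun x => Real.exp (c + s * x)) (gaussianReal 0 v) := by
  have hV : (0:ℝ) < (v:ℝ) := by exact_mod_cast hv.bot_lt
  rw [gaussianReal_of_var_ne_zero 0 hv,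
    integrable_withDensity_iff (measurable_gaussianPDF 0 v)
      (ae_of_all _ fun x => ENNReal.ofReal_lt_top)]
  have hb : (0:ℝ) < (2 * (v:ℝ))⁻¹ := by positivity
  have key : (fun x => Real.exp (c + s * x) * ((gaussianPDF 0 v x).toReal))
      = fun x => ((Real.sqrt (2 * π * v))⁻¹ * Real.exp (c + s^2 * v / 2)) *
        Real.exp (-((2 * (v:ℝ))⁻¹) * (x - s * v)^2) := by
    funext x
    rw [gaussianPDF, ENNReal.toReal_ofReal (gaussianPDFReal_nonneg 0 v x), gaussianPDFReal]
    have hexp : c + s * x + -(x - 0)^2 / (2 * (v:ℝ))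
        = (c + s^2 * v / 2) + (-((2 * (v:ℝ))⁻¹) * (x - s * v)^2) := by
      field_simp
      ring
    rw [mul_left_comm, ← Real.exp_add, hexp, Real.exp_add]
    ring
  rw [key]
  exact (((integrable_exp_neg_mul_sq hb).comp_sub_right (s * v)).const_mul _)

theorem rv_insider_gt_honest_riskless (M T ρ μ σ : ℝ) (hM : 0 < M) (hT : 0 < T) (hσ : 0 < σ)
    (hρμ : ρ > μ) (a : ℝ) (ha : a = (ρ - μ + σ ^ 2 / 2) * T / σ) :
    M * ((gaussianReal 0 T.toNNReal) {x | x ≤ a}).toReal * Real.exp (ρ * T)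
      + M * ∫ x in Set.Ioi a, Real.exp ((μ - σ ^ 2 / 2) * T + σ * x) ∂(gaussianReal 0 T.toNNReal)
      > M * Real.exp (ρ * T) := by
  set v : NNReal := T.toNNReal with hvdef
  have hv : v ≠ 0 := by
    simp only [hvdef, ne_eq, Real.toNNReal_eq_zero, not_le]
    exact hT
  set ν := gaussianReal 0 v with hν
  set E := Real.exp (ρ * T) with hE
  set f : ℝ → ℝ := fun x => Real.exp ((μ - σ ^ 2 / 2) * T + σ * x) with hf
  -- pointwise bound on Ioi a
  have hσa : σ * a = (ρ - μ + σ ^ 2 / 2) * T := by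
    rw [ha]; field_simp
  have hpt : ∀ x ∈ Set.Ioi a, E < f x := by
    intro x hx
    rw [hE, hf]
    apply Real.exp_lt_exp.mpr
    have : σ * a < σ * x := by
      exact mul_lt_mul_of_pos_left hx hσ
    nlinarith [hσa]
  -- integrability
  have hint : Integrable f ν := integrable_exp_lin_gaussian v hv _ σ
  -- positivity of measure of Ioi a
  have hQ0 : ν (Set.Ioi a) ≠ 0 := by
    intro h
    rw [hν, gaussianReal_of_var_ne_zero 0 hv,
      withDensity_apply_eq_zero (measurable_gaussianPDF 0 v)] at h
    have heq : {x | gaussianPDF 0 v x ≠ 0} ∩ Set.Ioi a = Set.Ioi a := by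
      apply Set.inter_eq_self_of_subset_right
      intro x _
      exact (gaussianPDF_pos 0 hv x).ne'
    rw [heq] at h
    simp [Real.volume_Ioi] at h
  have hQlt : ν (Set.Ioi a) ≠ ⊤ := measure_ne_top ν _
  have hQpos : 0 < (ν (Set.Ioi a)).toReal := ENNReal.toReal_pos hQ0 hQlt
  -- strict integral bound
  have hstrict : E * (ν (Set.Ioi a)).toReal < ∫ x in Set.Ioi a, f x ∂ν := by
    have hintE : IntegrableOn (fun _ => E) (Set.Ioi a) ν :=
      (integrable_const E).integrableOn
    have hintf : IntegrableOn f (Set.Ioi a) ν := hint.integrableOn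
    have hsub : 0 < ∫ x in Set.Ioi a, (f x - E) ∂ν := by
      rw [setIntegral_pos_iff_support_of_nonneg_ae]
      · refine lt_of_lt_of_le hQ0.bot_lt (measure_mono ?_)
        intro x hx
        exact ⟨(sub_pos.mpr (hpt x hx)).ne', hx⟩
      · filter_upwards [ae_restrict_mem measurableSet_Ioi] with x hx
        exact le_of_lt (sub_pos.mpr (hpt x hx))
      · exact hintf.sub hintE
    have := integral_sub hintf hintE
    rw [this] at hsub
    rw [integral_const] at hsub
    simp only [Measure.real_def, Measure.restrict_apply_univ, smul_eq_mul] at hsub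
    linarith [hsub]
  -- measures add to 1
  have hPQ : (ν {x | x ≤ a}).toReal + (ν (Set.Ioi a)).toReal = 1 := by
    have h1 : {x : ℝ | x ≤ a} = Set.Iic a := rfl
    have h2 : ν (Set.Iic a) + ν (Set.Ioi a) = 1 := by
      rw [← Set.compl_Iic]
      exact prob_add_prob_compl measurableSet_Iic
    rw [h1, ← ENNReal.toReal_add (measure_ne_top ν _) (measure_ne_top ν _), h2]
    simp
  have hPnn : 0 ≤ (ν {x | x ≤ a}).toReal := ENNReal.toReal_nonneg
  have hEpos : 0 < E := Real.exp_pos _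
  have key : M * E * ((ν {x | x ≤ a}).toReal + (ν (Set.Ioi a)).toReal) = M * E := by
    rw [hPQ, mul_one]
  nlinarith [mul_lt_mul_of_pos_left hstrict hM, key]
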